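/- Define for each natural number h the end-density ρ^{(h+1)} = Σ_{k=0}^{h} [ C(h,k) C(h+k,k) (1/3)^{h+k+1} + 2 C(h,k) Σ_{j=0}^{k−1} C(h+j,j) (1/3)^{h+j+1} ]. Then ρ^{(h+1)} → 1/2 as h → ∞. (That is, in the 3-site multilayer parking system the asymptotic density of the center site in high layers is 1/2.) -/

import Mathlib

open Real Finset Filter

namespace EndDensityAux

/-- pmf of a binomial `Bin(n, 2/3)` at `s`, written without natural subtraction. -/
noncomputable def W (n s : ℕ) : ℝ := (n.choose s : ℝ) * 2 ^ s / 3 ^ n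

/-- negative-binomial weight (scaled). -/
noncomputable def nb (h j : ℕ) : ℝ := ((h + j).choose j : ℝ) * 2 ^ (h + 1) / 3 ^ (h + j + 1)

/-- tail probability `P(Bin(h+j, 2/3) ≥ h+1)`. -/
noncomputable def Tt (h j : ℕ) : ℝ := ∑ i ∈ range j, W (h + j) (h + 1 + i)

/-- comparison double sum. -/
noncomputable def R (h d m : ℕ) : ℝ :=
  ∑ c ∈ range (m + 1), ∑ a ∈ range (h + d + 1),
    W m c * W (h + d) a * (if h + 1 + c ≤ a + m then (1 : ℝ) else 0)

lemma W_nonneg (n s : ℕ) : 0 ≤ W n s := by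
  unfold W; positivity

lemma W_eq_zero {n s : ℕ} (hs : n < s) : W n s = 0 := by
  simp [W, Nat.choose_eq_zero_of_lt hs]

lemma W_succ_succ (n s : ℕ) : W (n + 1) (s + 1) = 2 / 3 * W n s + 1 / 3 * W n (s + 1) := by
  unfold W
  rw [Nat.choose_succ_succ' n s]
  push_cast
  field_simp
  ring

lemma W_succ_zero (n : ℕ) : W (n + 1) 0 = 1 / 3 * W n 0 := by
  unfold W
  simp only [Nat.choose_zero_right, Nat.cast_one, pow_zero, one_mul, mul_one]
  rw [pow_succ]
  field_simp

lemma W_zero_zero : W 0 0 = 1 := by simp [W]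

lemma W_sum (n : ℕ) : ∑ s ∈ range (n + 1), W n s = 1 := by
  have h : ((2 : ℝ) + 1) ^ n = ∑ s ∈ range (n + 1), 2 ^ s * 1 ^ (n - s) * (n.choose s : ℝ) :=
    add_pow 2 1 n
  have h' : (3 : ℝ) ^ n = ∑ s ∈ range (n + 1), 2 ^ s * (n.choose s : ℝ) := by
    norm_num at h
    convert h using 2 with s
  unfold W
  rw [← Finset.sum_div, div_eq_one_iff_eq (by positivity : (3:ℝ)^n ≠ 0), h']
  exact Finset.sum_congr rfl fun s _ => by ring

lemma conv (n : ℕ) (f : ℕ → ℝ) :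
    ∑ s ∈ range (n + 2), W (n + 1) s * f s
      = 1 / 3 * ∑ s ∈ range (n + 1), W n s * f s
        + 2 / 3 * ∑ s ∈ range (n + 1), W n s * f (s + 1) := by
  have h0 : ∑ s ∈ range (n + 2), W (n + 1) s * f s
      = (∑ s ∈ range (n + 1), W (n + 1) (s + 1) * f (s + 1)) + W (n + 1) 0 * f 0 :=
    Finset.sum_range_succ' (fun s => W (n + 1) s * f s) (n + 1)
  have h1 : ∑ s ∈ range (n + 1), W n s * f s
      = (∑ s ∈ range (n + 1), W n (s + 1) * f (s + 1)) + W n 0 * f 0 := by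
    have h2 : ∑ s ∈ range (n + 2), W n s * f s
        = (∑ s ∈ range (n + 1), W n (s + 1) * f (s + 1)) + W n 0 * f 0 :=
      Finset.sum_range_succ' (fun s => W n s * f s) (n + 1)
    rw [Finset.sum_range_succ, W_eq_zero (by omega : n < n + 1), zero_mul, add_zero] at h2
    exact h2
  rw [h0, h1]
  have h3 : ∀ s, W (n + 1) (s + 1) * f (s + 1)
      = 2 / 3 * (W n s * f (s + 1)) + 1 / 3 * (W n (s + 1) * f (s + 1)) := by
    intro s; rw [W_succ_succ]; ring
  rw [Finset.sum_congr rfl fun s _ => h3 s, Finset.sum_add_distrib, ← Finset.mul_sum,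
    ← Finset.mul_sum, W_succ_zero]
  ring

lemma pascal_split (n : ℕ) (f : ℕ → ℝ) :
    ∑ k ∈ range (n + 2), ((n + 1).choose k : ℝ) * f k
      = ∑ k ∈ range (n + 1), (n.choose k : ℝ) * f k
        + ∑ k ∈ range (n + 1), (n.choose k : ℝ) * f (k + 1) := by
  have h0 : ∑ k ∈ range (n + 2), ((n + 1).choose k : ℝ) * f k
      = (∑ k ∈ range (n + 1), ((n + 1).choose (k + 1) : ℝ) * f (k + 1))
        + ((n + 1).choose 0 : ℝ) * f 0 :=
    Finset.sum_range_succ' (fun k => ((n + 1).choose k : ℝ) * f k) (n + 1)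
  have h1 : ∑ k ∈ range (n + 1), (n.choose k : ℝ) * f k
      = (∑ k ∈ range (n + 1), (n.choose (k + 1) : ℝ) * f (k + 1)) + (n.choose 0 : ℝ) * f 0 := by
    have h2 : ∑ k ∈ range (n + 2), (n.choose k : ℝ) * f k
        = (∑ k ∈ range (n + 1), (n.choose (k + 1) : ℝ) * f (k + 1)) + (n.choose 0 : ℝ) * f 0 :=
      Finset.sum_range_succ' (fun k => (n.choose k : ℝ) * f k) (n + 1)
    rw [Finset.sum_range_succ, Nat.choose_eq_zero_of_lt (by omega : n < n + 1)] at h2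
    simpa using h2
  rw [h0, h1]
  have h3 : ∀ k, (((n + 1).choose (k + 1) : ℝ)) * f (k + 1)
      = (n.choose k : ℝ) * f (k + 1) + (n.choose (k + 1) : ℝ) * f (k + 1) := by
    intro k
    rw [Nat.choose_succ_succ' n k]
    push_cast
    ring
  rw [Finset.sum_congr rfl fun k _ => h3 k, Finset.sum_add_distrib]
  simp only [Nat.choose_zero_right, Nat.cast_one, one_mul]
  ring

lemma nb_eq (h j : ℕ) : nb h j = 2 / 3 * W (h + j) h := by
  unfold nb W
  have hsym : (h + j).choose j = (h + j).choose h := by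
    rw [Nat.add_comm h j, Nat.choose_symm_add]
  rw [hsym, pow_succ (2:ℝ) h, pow_succ (3:ℝ) (h + j)]
  field_simp

lemma Tt_zero (h : ℕ) : Tt h 0 = 0 := by simp [Tt]

lemma Tt_succ (h j : ℕ) : Tt h (j + 1) = Tt h j + nb h j := by
  unfold Tt
  have key : ∀ i, W (h + (j + 1)) (h + 1 + i)
      = 2 / 3 * W (h + j) (h + i) + 1 / 3 * W (h + j) (h + 1 + i) := by
    intro i
    have e1 : h + (j + 1) = (h + j) + 1 := by omega
    have e2 : h + 1 + i = (h + i) + 1 := by omega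
    rw [e1, e2, W_succ_succ]
  rw [Finset.sum_congr rfl fun i _ => key i, Finset.sum_add_distrib]
  have hA : ∑ i ∈ range (j + 1), 2 / 3 * W (h + j) (h + i)
      = 2 / 3 * (W (h + j) h + ∑ i ∈ range j, W (h + j) (h + 1 + i)) := by
    rw [← Finset.mul_sum]
    congr 1
    rw [Finset.sum_range_succ' (fun i => W (h + j) (h + i)) j]
    simp only [Nat.add_zero]
    rw [add_comm]
    congr 1
    exact Finset.sum_congr rfl fun i _ => by rw [show h + (i + 1) = h + 1 + i by omega]
  have hB : ∑ i ∈ range (j + 1), 1 / 3 * W (h + j) (h + 1 + i)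
      = 1 / 3 * ∑ i ∈ range j, W (h + j) (h + 1 + i) := by
    rw [← Finset.mul_sum, Finset.sum_range_succ, W_eq_zero (by omega), add_zero]
  rw [hA, hB, nb_eq]
  ring

lemma Tt_eq (h k : ℕ) : Tt h k = ∑ j ∈ range k, nb h j := by
  induction k with
  | zero => simp [Tt_zero]
  | succ k ih => rw [Tt_succ, ih, Finset.sum_range_succ]

lemma nb_nonneg (h j : ℕ) : 0 ≤ nb h j := by unfold nb; positivity

lemma Tt_nonneg (h j : ℕ) : 0 ≤ Tt h j := by
  rw [Tt_eq]; exact Finset.sum_nonneg fun j _ => nb_nonneg h j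

lemma Tt_le_one (h j : ℕ) (hj : j ≤ h + 1) : Tt h j ≤ 1 := by
  have h1 : Tt h j ≤ Tt h (h + 1) := by
    rw [Tt_eq, Tt_eq]
    exact Finset.sum_le_sum_of_subset_of_nonneg (Finset.range_subset_range.2 hj)
      (fun i _ _ => nb_nonneg h i)
  have h2 : Tt h (h + 1) ≤ 1 := by
    have hw := W_sum (h + (h + 1))
    have e : (h + (h + 1)) + 1 = (h + 1) + (h + 1) := by omega
    rw [e, Finset.sum_range_add] at hw
    have hfirst : (0:ℝ) ≤ ∑ x ∈ range (h + 1), W (h + (h + 1)) x :=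
      Finset.sum_nonneg fun s _ => W_nonneg _ s
    unfold Tt
    have : ∑ i ∈ range (h + 1), W (h + (h + 1)) (h + 1 + i)
        = ∑ x ∈ range (h + 1), W (h + (h + 1)) (h + 1 + x) := rfl
    linarith [hw]
  linarith

/-- inner sum of `R`. -/
noncomputable def G (h d m c : ℕ) : ℝ :=
  ∑ a ∈ range (h + d + 1), W (h + d) a * (if h + 1 + c ≤ a + m then (1 : ℝ) else 0)

lemma R_eq (h d m : ℕ) : R h d m = ∑ c ∈ range (m + 1), W m c * G h d m c := by
  unfold R G
  refine Finset.sum_congr rfl fun c _ => ?_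
  rw [Finset.mul_sum]
  exact Finset.sum_congr rfl fun a _ => by ring

lemma G_shift (h d m c : ℕ) : G h d (m + 1) (c + 1) = G h d m c := by
  unfold G
  refine Finset.sum_congr rfl fun a _ => ?_
  have hiff : (h + 1 + (c + 1) ≤ a + (m + 1)) ↔ (h + 1 + c ≤ a + m) := by omega
  rw [if_congr hiff rfl rfl]

lemma G_conv (h d m c : ℕ) :
    G h (d + 1) m c = 1 / 3 * G h d m c + 2 / 3 * G h d (m + 1) c := by
  unfold G
  have e1 : h + (d + 1) + 1 = (h + d) + 2 := by omega
  have e2 : h + (d + 1) = (h + d) + 1 := by omega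
  rw [e1]
  have : ∑ a ∈ range ((h + d) + 2), W (h + (d + 1)) a * (if h + 1 + c ≤ a + m then (1:ℝ) else 0)
      = ∑ a ∈ range ((h + d) + 2), W ((h + d) + 1) a * (if h + 1 + c ≤ a + m then (1:ℝ) else 0) := by
    rw [e2]
  rw [this, conv (h + d) (fun a => if h + 1 + c ≤ a + m then (1:ℝ) else 0)]
  congr 1
  rw [mul_eq_mul_left_iff]
  left
  refine Finset.sum_congr rfl fun a _ => ?_
  have hiff : (h + 1 + c ≤ (a + 1) + m) ↔ (h + 1 + c ≤ a + (m + 1)) := by omega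
  rw [if_congr hiff rfl rfl]

/-- base case of the mixing lemma. -/
lemma R_zero (h d : ℕ) : R h d 0 = Tt h d := by
  rw [R_eq]
  rw [Finset.sum_range_one, W_zero_zero, one_mul]
  unfold G
  have e : h + d + 1 = (h + 1) + d := by omega
  rw [e, Finset.sum_range_add]
  have hz : ∑ a ∈ range (h + 1), W (h + d) a * (if h + 1 + 0 ≤ a + 0 then (1:ℝ) else 0) = 0 :=
    Finset.sum_eq_zero fun a ha => by
      rw [if_neg (by have := Finset.mem_range.1 ha; omega), mul_zero]
  rw [hz, zero_add]
  unfold Tt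
  refine Finset.sum_congr rfl fun i _ => ?_
  rw [if_pos (by omega), mul_one]

lemma Rstep (h d m : ℕ) : R h d (m + 1) = (R h d m + R h (d + 1) m) / 2 := by
  have h1 : R h d (m + 1)
      = 1 / 3 * (∑ c ∈ range (m + 1), W m c * G h d (m + 1) c) + 2 / 3 * R h d m := by
    rw [R_eq, conv m (G h d (m + 1))]
    congr 1
    rw [mul_eq_mul_left_iff]
    left
    rw [R_eq]
    exact Finset.sum_congr rfl fun c _ => by rw [G_shift]
  have h2 : R h (d + 1) m
      = 1 / 3 * R h d m + 2 / 3 * (∑ c ∈ range (m + 1), W m c * G h d (m + 1) c) := by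
    rw [R_eq, R_eq]
    have e : ∀ c ∈ range (m + 1), W m c * G h (d + 1) m c
        = 1 / 3 * (W m c * G h d m c) + 2 / 3 * (W m c * G h d (m + 1) c) := by
      intro c _
      rw [G_conv]
      ring
    rw [Finset.sum_congr rfl e, Finset.sum_add_distrib, ← Finset.mul_sum, ← Finset.mul_sum]
  linarith

lemma gm (h : ℕ) : ∀ m d, (∑ k ∈ range (m + 1), (m.choose k : ℝ) * Tt h (d + k)) = 2 ^ m * R h d m := by
  intro m
  induction m with
  | zero =>
    intro d
    simp [R_zero]
  | succ m ih =>
    intro d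
    rw [pascal_split m (fun k => Tt h (d + k))]
    have e2 : ∑ k ∈ range (m + 1), (m.choose k : ℝ) * Tt h (d + (k + 1))
        = ∑ k ∈ range (m + 1), (m.choose k : ℝ) * Tt h ((d + 1) + k) :=
      Finset.sum_congr rfl fun k _ => by rw [show d + (k + 1) = (d + 1) + k by omega]
    rw [e2, ih d, ih (d + 1), Rstep]
    ring

lemma final_id (h : ℕ) : R h 0 (h + 1) + R h 1 h = 1 := by
  have hA : R h 0 (h + 1) = ∑ c ∈ range (h + 1 + 1), ∑ a ∈ range (h + 1),
      W (h + 1) c * W h a * (if h + 1 + c ≤ a + (h + 1) then (1:ℝ) else 0) := by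
    unfold R
    simp only [Nat.add_zero]
  have hB : R h 1 h = ∑ a ∈ range (h + 1 + 1), ∑ c ∈ range (h + 1),
      W h c * W (h + 1) a * (if h + 1 + c ≤ a + h then (1:ℝ) else 0) := by
    unfold R
    rw [Finset.sum_comm]
  rw [hA, hB, ← Finset.sum_add_distrib]
  have hpt : ∀ c ∈ range (h + 1 + 1), (∑ a ∈ range (h + 1),
        W (h + 1) c * W h a * (if h + 1 + c ≤ a + (h + 1) then (1:ℝ) else 0))
      + (∑ a ∈ range (h + 1),
        W h a * W (h + 1) c * (if h + 1 + a ≤ c + h then (1:ℝ) else 0))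
      = ∑ a ∈ range (h + 1), W (h + 1) c * W h a := by
    intro c _
    rw [← Finset.sum_add_distrib]
    refine Finset.sum_congr rfl fun a _ => ?_
    rcases le_or_gt c a with hc | hc
    · rw [if_pos (by omega), if_neg (by omega)]; ring
    · rw [if_neg (by omega), if_pos (by omega)]; ring
  rw [Finset.sum_congr rfl hpt, ← Finset.sum_mul_sum, W_sum, W_sum, one_mul]

lemma master (h : ℕ) :
    ∑ k ∈ range (h + 1), (h.choose k : ℝ) * (3 * nb h k + 4 * Tt h k) = 2 ^ (h + 1) := by
  have e1 : ∀ k ∈ range (h + 1), (h.choose k : ℝ) * (3 * nb h k + 4 * Tt h k)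
      = 3 * ((h.choose k : ℝ) * Tt h (k + 1)) + (h.choose k : ℝ) * Tt h k := by
    intro k _
    rw [Tt_succ]
    ring
  rw [Finset.sum_congr rfl e1, Finset.sum_add_distrib, ← Finset.mul_sum]
  have hgm1 : ∑ k ∈ range (h + 1), (h.choose k : ℝ) * Tt h (k + 1) = 2 ^ h * R h 1 h := by
    have := gm h h 1
    rw [← this]
    exact Finset.sum_congr rfl fun k _ => by rw [Nat.add_comm 1 k]
  have hgm0 : ∑ k ∈ range (h + 1 + 1), ((h + 1).choose k : ℝ) * Tt h k
      = 2 ^ (h + 1) * R h 0 (h + 1) := by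
    have := gm h (h + 1) 0
    rw [← this]
    exact Finset.sum_congr rfl fun k _ => by rw [Nat.zero_add]
  have hps := pascal_split h (Tt h)
  have hfin := final_id h
  have hpow : (2 : ℝ) ^ (h + 1) = 2 * 2 ^ h := by ring
  rw [hgm0] at hps
  rw [hgm1] at hps
  rw [hgm1]
  have hfin2 : (2:ℝ) ^ (h + 1) * R h 0 (h + 1) + (2:ℝ) ^ (h + 1) * R h 1 h = 2 ^ (h + 1) := by
    have := congrArg (fun x : ℝ => 2 ^ (h + 1) * x) hfin
    simpa [mul_add] using this
  have e4 : (2:ℝ) ^ (h + 1) * R h 1 h = 2 * (2 ^ h * R h 1 h) := by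
    rw [hpow]; ring
  linarith [hps, hfin2, e4]

/-- the deficit sum. -/
noncomputable def Dd (h : ℕ) : ℝ := ∑ k ∈ range (h + 1), (h.choose k : ℝ) * nb h k

lemma rho_eq (h : ℕ) :
    (∑ k ∈ range (h + 1),
      ((h.choose k : ℝ) * ((h + k).choose k : ℝ) * (1 / 3 : ℝ) ^ (h + k + 1) +
        2 * (h.choose k : ℝ) *
          ∑ j ∈ range k, ((h + j).choose j : ℝ) * (1 / 3 : ℝ) ^ (h + j + 1)))
      = 1 / 2 - Dd h / 2 ^ (h + 2) := by
  have hnb : ∀ j, ((h + j).choose j : ℝ) * (1 / 3 : ℝ) ^ (h + j + 1) = nb h j / 2 ^ (h + 1) := by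
    intro j
    unfold nb
    rw [div_pow, one_pow]
    field_simp
  have hS : ∀ k, (∑ j ∈ range k, ((h + j).choose j : ℝ) * (1 / 3 : ℝ) ^ (h + j + 1))
      = Tt h k / 2 ^ (h + 1) := by
    intro k
    rw [Tt_eq, Finset.sum_div]
    exact Finset.sum_congr rfl fun j _ => hnb j
  have expand : (∑ k ∈ range (h + 1),
      ((h.choose k : ℝ) * ((h + k).choose k : ℝ) * (1 / 3 : ℝ) ^ (h + k + 1) +
        2 * (h.choose k : ℝ) *
          ∑ j ∈ range k, ((h + j).choose j : ℝ) * (1 / 3 : ℝ) ^ (h + j + 1)))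
      = (∑ k ∈ range (h + 1), (h.choose k : ℝ) * (nb h k + 2 * Tt h k)) / 2 ^ (h + 1) := by
    rw [Finset.sum_div]
    refine Finset.sum_congr rfl fun k _ => ?_
    rw [mul_assoc, hnb k, hS k]
    ring
  rw [expand]
  have hsplit : ∑ k ∈ range (h + 1), (h.choose k : ℝ) * (nb h k + 2 * Tt h k)
      = 2 ^ h - Dd h / 2 := by
    have e2 : ∀ k ∈ range (h + 1), (h.choose k : ℝ) * (nb h k + 2 * Tt h k)
        = ((h.choose k : ℝ) * (3 * nb h k + 4 * Tt h k)) / 2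
          - ((h.choose k : ℝ) * nb h k) / 2 := by
      intro k _
      ring
    rw [Finset.sum_congr rfl e2, Finset.sum_sub_distrib, ← Finset.sum_div, ← Finset.sum_div,
      master]
    unfold Dd
    rw [show (2:ℝ)^(h+1) = 2 * 2^h by ring]
    ring
  rw [hsplit]
  rw [show (2:ℝ)^(h+2) = 2 * 2 * 2^h by ring, show (2:ℝ)^(h+1) = 2 * 2^h by ring]
  have : (2:ℝ)^h ≠ 0 := by positivity
  field_simp

lemma Dd_nonneg (h : ℕ) : 0 ≤ Dd h :=
  Finset.sum_nonneg fun k _ => mul_nonneg (by positivity) (nb_nonneg h k)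

lemma Dd_le (h : ℕ) : Dd h ≤ (h.choose (h / 2) : ℝ) := by
  have h1 : Dd h ≤ ∑ k ∈ range (h + 1), (h.choose (h / 2) : ℝ) * nb h k := by
    refine Finset.sum_le_sum fun k _ => ?_
    exact mul_le_mul_of_nonneg_right (by exact_mod_cast Nat.choose_le_middle k h)
      (nb_nonneg h k)
  have h2 : ∑ k ∈ range (h + 1), (h.choose (h / 2) : ℝ) * nb h k
      = (h.choose (h / 2) : ℝ) * Tt h (h + 1) := by
    rw [← Finset.mul_sum, ← Tt_eq]
  calc Dd h ≤ (h.choose (h / 2) : ℝ) * Tt h (h + 1) := by rw [← h2]; exact h1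
    _ ≤ (h.choose (h / 2) : ℝ) * 1 :=
        mul_le_mul_of_nonneg_left (Tt_le_one h (h + 1) le_rfl) (by positivity)
    _ = (h.choose (h / 2) : ℝ) := mul_one _

lemma cb_sq (m : ℕ) : (Nat.centralBinom m : ℝ) ^ 2 * (2 * m + 1) ≤ 16 ^ m := by
  induction m with
  | zero => simp [Nat.centralBinom]
  | succ m ih =>
    push_cast
    have key : ((m : ℝ) + 1) * (Nat.centralBinom (m + 1) : ℝ)
        = 2 * (2 * m + 1) * (Nat.centralBinom m : ℝ) := by
      have := Nat.succ_mul_centralBinom_succ m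
      have := congrArg (Nat.cast : ℕ → ℝ) this
      push_cast at this
      linarith
    have sq := congrArg (fun x : ℝ => x ^ 2) key
    have hpos : (0:ℝ) < ((m:ℝ) + 1) ^ 2 := by positivity
    have goalmul : ((m:ℝ) + 1) ^ 2 * ((Nat.centralBinom (m + 1) : ℝ) ^ 2 * (2 * (m + 1) + 1))
        ≤ ((m:ℝ) + 1) ^ 2 * 16 ^ (m + 1) := by
      have e3 : ((m:ℝ) + 1) ^ 2 * ((Nat.centralBinom (m + 1) : ℝ) ^ 2 * (2 * (m + 1) + 1))
          = 4 * (2 * m + 1) * (2 * m + 3)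
            * ((Nat.centralBinom m : ℝ) ^ 2 * (2 * m + 1)) := by
        linear_combination (2 * (m:ℝ) + 3) * sq
      rw [e3]
      have h1 : 4 * (2 * (m:ℝ) + 1) * (2 * m + 3) * ((Nat.centralBinom m : ℝ) ^ 2 * (2 * m + 1))
          ≤ 4 * (2 * (m:ℝ) + 1) * (2 * m + 3) * 16 ^ m := by
        apply mul_le_mul_of_nonneg_left ih
        positivity
      have h2 : 4 * (2 * (m:ℝ) + 1) * (2 * m + 3) * 16 ^ m
          ≤ ((m:ℝ) + 1) ^ 2 * 16 ^ (m + 1) := by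
        have h16 : (0:ℝ) ≤ 16 ^ m := by positivity
        have : 4 * (2 * (m:ℝ) + 1) * (2 * m + 3) ≤ 16 * ((m:ℝ) + 1) ^ 2 := by nlinarith
        calc 4 * (2 * (m:ℝ) + 1) * (2 * m + 3) * 16 ^ m
            ≤ 16 * ((m:ℝ) + 1) ^ 2 * 16 ^ m := mul_le_mul_of_nonneg_right this h16
          _ = ((m:ℝ) + 1) ^ 2 * 16 ^ (m + 1) := by ring
      linarith
    exact le_of_mul_le_mul_left goalmul hpos

lemma mid_sq (h : ℕ) : (h.choose (h / 2) : ℝ) ^ 2 * h ≤ 4 * 4 ^ h := by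
  rcases Nat.even_or_odd' h with ⟨m, hm | hm⟩
  · subst hm
    have hdiv : 2 * m / 2 = m := by omega
    rw [hdiv]
    have hcb : (2 * m).choose m = Nat.centralBinom m := rfl
    rw [hcb]
    have h16 : (4:ℝ) ^ (2 * m) = 16 ^ m := by
      rw [pow_mul]
      norm_num
    rw [h16]
    have hq := cb_sq m
    have hnn : (0:ℝ) ≤ (Nat.centralBinom m : ℝ) ^ 2 := by positivity
    push_cast
    nlinarith [hq, hnn]
  · subst hm
    have hdiv : (2 * m + 1) / 2 = m := by omega
    rw [hdiv]
    have hle : (2 * m + 1).choose m ≤ Nat.centralBinom (m + 1) := by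
      have e : Nat.centralBinom (m + 1) = (2 * m + 1 + 1).choose (m + 1) := by
        unfold Nat.centralBinom
        rw [show 2 * (m + 1) = 2 * m + 1 + 1 by omega]
      rw [e, Nat.choose_succ_succ' (2 * m + 1) m]
      omega
    have hleR : ((2 * m + 1).choose m : ℝ) ≤ (Nat.centralBinom (m + 1) : ℝ) := by
      exact_mod_cast hle
    have hnn : (0:ℝ) ≤ ((2 * m + 1).choose m : ℝ) := by positivity
    have hsq : ((2 * m + 1).choose m : ℝ) ^ 2 ≤ (Nat.centralBinom (m + 1) : ℝ) ^ 2 := by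
      nlinarith
    have hcb := cb_sq (m + 1)
    push_cast at hcb ⊢
    have h16 : (16:ℝ) ^ (m + 1) = 4 * 4 ^ (2 * m + 1) := by
      have e1 : (16:ℝ) ^ (m + 1) = 16 ^ m * 16 := by ring
      have e2 : (4:ℝ) ^ (2 * m + 1) = 4 ^ (2 * m) * 4 := by ring
      have e3 : (4:ℝ) ^ (2 * m) = 16 ^ m := by
        rw [pow_mul]; norm_num
      rw [e1, e2, e3]; ring
    rw [← h16]
    have hnn2 : (0:ℝ) ≤ (Nat.centralBinom (m + 1) : ℝ) ^ 2 := by positivity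
    nlinarith [hcb, hsq, hnn, hleR]

lemma g_sq_le (h : ℕ) (hh : 1 ≤ h) : (Dd h / 2 ^ (h + 2)) ^ 2 ≤ 4 / h := by
  have hD := Dd_le h
  have hDn := Dd_nonneg h
  have hmid := mid_sq h
  have hhR : (1:ℝ) ≤ (h:ℝ) := by exact_mod_cast hh
  have hpos : (0:ℝ) < (h:ℝ) := by linarith
  have h2h : (0:ℝ) < 2 ^ (h + 2) := by positivity
  have hg : Dd h / 2 ^ (h + 2) ≤ (h.choose (h / 2) : ℝ) / 2 ^ h := by
    have : Dd h / 2 ^ (h + 2) ≤ Dd h / 2 ^ h := by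
      apply div_le_div_of_nonneg_left hDn ?_ ?_ |>.trans_eq rfl
      · positivity
      · exact pow_le_pow_right₀ (by norm_num) (by omega)
    refine this.trans ?_
    exact div_le_div_of_nonneg_right hD (by positivity) |>.trans_eq rfl
  have hgn : 0 ≤ Dd h / 2 ^ (h + 2) := by positivity
  have hsq : (Dd h / 2 ^ (h + 2)) ^ 2 ≤ ((h.choose (h / 2) : ℝ) / 2 ^ h) ^ 2 := by
    nlinarith [hg, hgn]
  refine hsq.trans ?_
  have h4 : ((2:ℝ) ^ h) ^ 2 = 4 ^ h := by
    rw [← pow_mul, show h * 2 = 2 * h by ring, pow_mul]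
    norm_num
  rw [div_pow, h4, div_le_div_iff₀ (by positivity) hpos]
  nlinarith [hmid]

end EndDensityAux

theorem end_density_tendsto_one_half :
    Tendsto
      (fun h : ℕ =>
        ∑ k ∈ range (h + 1),
          ((h.choose k : ℝ) * ((h + k).choose k : ℝ) * (1 / 3 : ℝ) ^ (h + k + 1) +
            2 * (h.choose k : ℝ) *
              ∑ j ∈ range k, ((h + j).choose j : ℝ) * (1 / 3 : ℝ) ^ (h + j + 1)))
      atTop (nhds (1 / 2 : ℝ)) := by
  have hg0 : Tendsto (fun h : ℕ => (EndDensityAux.Dd h / 2 ^ (h + 2)) ^ 2) atTop (nhds 0) := by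
    apply squeeze_zero' (Eventually.of_forall fun h => by positivity)
    · filter_upwards [eventually_ge_atTop 1] with h hh
      exact EndDensityAux.g_sq_le h hh
    · exact tendsto_const_div_atTop_nhds_zero_nat 4
  have hg : Tendsto (fun h : ℕ => EndDensityAux.Dd h / 2 ^ (h + 2)) atTop (nhds 0) := by
    have hc : Tendsto (fun h : ℕ => Real.sqrt ((EndDensityAux.Dd h / 2 ^ (h + 2)) ^ 2)) atTop (nhds 0) := by
      have := (Real.continuous_sqrt.tendsto 0).comp hg0
      simpa [Function.comp_def] using this
    refine hc.congr fun h => ?_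
    exact Real.sqrt_sq (div_nonneg (EndDensityAux.Dd_nonneg h) (by positivity))
  have hmain : Tendsto (fun h : ℕ => 1 / 2 - EndDensityAux.Dd h / 2 ^ (h + 2)) atTop (nhds (1 / 2)) := by
    have := (tendsto_const_nhds (x := (1/2 : ℝ)) (f := atTop (α := ℕ))).sub hg
    simpa using this
  exact hmain.congr fun h => (EndDensityAux.rho_eq h).symm
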